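/- Let R \subseteq S be a finite extension of Noetherian integral domains (with S contained in an absolute integral closure of R), and let I \subseteq R be an ideal and \alpha \geq 0 a rational number. Then (IS)_\alpha \cap R = I_\alpha, where (\cdot)_\alpha denotes the fractional integrally closed power. Consequently (IS)_{>\alpha} \cap R = I_{>\alpha}. -/

import Mathlib

/-- Integral closure of an ideal: elements satisfying an equation of integral dependence. -/
def idealIntClosure {R : Type} [CommRing R] (I : Ideal R) : Set R :=
  {x | ∃ n : ℕ, 0 < n ∧ ∃ c : ℕ → R, (∀ i, 1 ≤ i → i ≤ n → c i ∈ I ^ i) ∧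
    x ^ n + ∑ i ∈ Finset.Icc 1 n, c i * x ^ (n - i) = 0}

/-- The fractional integrally closed power `I_q` for a rational `q ≥ 0`. -/
def fracPow {R : Type} [CommRing R] (I : Ideal R) (q : ℚ) : Set R :=
  {x | x ^ q.den ∈ idealIntClosure (I ^ q.num.toNat)}

lemma spanA {S : Type} [CommRing S] (J' : Ideal S) (y : S) (K : Ideal S)
    (hK : K = J' + Ideal.span {y}) (m : ℕ) :
    Ideal.span {y} * K ^ m ≤ J' * K ^ m + Ideal.span {y} ^ (m + 1) := by
  induction m with
  | zero => simpa using le_sup_right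
  | succ m ih =>
    have h1 : Ideal.span {y} * K ^ (m + 1) = (Ideal.span {y} * K ^ m) * K := by
      rw [pow_succ, ← mul_assoc]
    have h2 : (J' * K ^ m + Ideal.span {y} ^ (m + 1)) * K
        = J' * K ^ (m + 1) + (Ideal.span {y} ^ (m + 1) * J' + Ideal.span {y} ^ (m + 2)) := by
      rw [add_mul, mul_assoc, ← pow_succ]
      congr 1
      rw [hK, mul_add, ← pow_succ]
    rw [h1]
    refine le_trans (mul_le_mul_left ih K) ?_
    rw [h2]
    refine sup_le le_sup_left (sup_le ?_ le_sup_right)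
    apply le_sup_of_le_left
    rw [mul_comm]
    refine mul_le_mul_right ?_ _
    rw [hK]
    exact pow_le_pow_left' le_sup_right _

lemma contractAux {R S : Type} [CommRing R] [CommRing S] [Algebra R S]
    (J : Ideal R) (M : Ideal S) {z : S} (hz : z ∈ J.map (algebraMap R S) * M) :
    z ∈ J • (Submodule.restrictScalars R (M : Submodule S S)) := by
  refine Submodule.mul_induction_on hz ?_ (fun a b ha hb => add_mem ha hb)
  intro a ha m hm
  rw [Ideal.map] at ha
  induction ha using Submodule.span_induction generalizing m with
  | mem u hu =>
    obtain ⟨j, hj, rfl⟩ := hu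
    have : algebraMap R S j * m = j • m := (Algebra.smul_def j m).symm
    rw [this]
    exact Submodule.smul_mem_smul hj hm
  | zero => simpa using Submodule.zero_mem _
  | add u v hu hv ihu ihv =>
    rw [add_mul]
    exact add_mem (ihu m hm) (ihv m hm)
  | smul s u hu ihu =>
    have : (s • u) * m = u * (s * m) := by rw [smul_eq_mul]; ring
    rw [this]
    exact ihu (s * m) (Ideal.mul_mem_left _ _ hm)

lemma bwd {R S : Type} [CommRing R] [IsDomain R] [IsNoetherianRing R]
    [CommRing S] [IsDomain S] [Algebra R S]
    (hinj : Function.Injective (algebraMap R S)) [Module.Finite R S]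
    (J : Ideal R) (x : R)
    (hx : algebraMap R S x ∈ idealIntClosure (J.map (algebraMap R S))) :
    x ∈ idealIntClosure J := by
  by_cases hx0 : x = 0
  · exact ⟨1, one_pos, fun _ => 0, by simp, by simp [hx0]⟩
  obtain ⟨n, hn, c, hc, heq⟩ := hx
  set φ := algebraMap R S with hφ
  set y : S := φ x with hy
  set J' : Ideal S := J.map φ with hJ'
  set K : Ideal S := J' + Ideal.span {y} with hK
  have hyne : y ≠ 0 := fun h => hx0 (hinj (by rw [map_zero]; exact h))
  have hyK : y ∈ K := Submodule.mem_sup_right (Ideal.mem_span_singleton_self y)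
  -- y^n ∈ J' * K^(n-1)
  have hyn : y ^ n ∈ J' * K ^ (n - 1) := by
    have hsum : y ^ n = -∑ i ∈ Finset.Icc 1 n, c i * y ^ (n - i) := by
      rw [eq_neg_iff_add_eq_zero]; exact heq
    rw [hsum]
    refine neg_mem (Submodule.sum_mem _ fun i hi => ?_)
    rw [Finset.mem_Icc] at hi
    obtain ⟨j, rfl⟩ : ∃ j, i = j + 1 := ⟨i - 1, by omega⟩
    have h1 : c (j+1) * y ^ (n - (j+1)) ∈ (J' ^ (j+1)) * Ideal.span {y} ^ (n - (j+1)) :=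
      Ideal.mul_mem_mul (hc _ hi.1 hi.2) (Ideal.pow_mem_pow (Ideal.mem_span_singleton_self y) _)
    refine le_trans ?_ (le_refl (J' * K ^ (n-1))) h1
    have heqpow : J' ^ (j+1) * Ideal.span {y} ^ (n - (j+1))
        = J' * (J' ^ j * Ideal.span {y} ^ (n - (j+1))) := by
      rw [pow_succ', mul_assoc]
    rw [heqpow]
    refine mul_le_mul_right ?_ _
    calc J' ^ j * Ideal.span {y} ^ (n - (j+1)) ≤ K ^ j * K ^ (n - (j+1)) := by
          gcongr <;> [exact le_sup_left; exact le_sup_right]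
      _ = K ^ (n - 1) := by rw [← pow_add]; congr 1; omega
  have hsp : Ideal.span {y} * K ^ (n - 1) ≤ J' * K ^ (n - 1) := by
    have h := spanA J' y K hK (n - 1)
    rw [Nat.sub_add_cancel hn] at h
    refine le_trans h (sup_le le_rfl ?_)
    rw [Ideal.span_singleton_pow, Ideal.span_le, Set.singleton_subset_iff]
    exact hyn
  -- the module
  set N : Submodule R S := Submodule.restrictScalars R ((K ^ (n-1) : Ideal S) : Submodule S S)
    with hN
  haveI : IsNoetherian R S := isNoetherian_of_isNoetherianRing_of_finite R S
  haveI : Module.Finite R N := Module.Finite.iff_fg.mpr (IsNoetherian.noetherian _)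
  set f : Module.End R N := algebraMap R (Module.End R N) x with hf
  have hrange : LinearMap.range f ≤ J • (⊤ : Submodule R N) := by
    rintro _ ⟨m, rfl⟩
    rw [Submodule.mem_smul_top_iff]
    have hfm : ((f m : N) : S) = y * (m : S) := by
      rw [hf, Module.algebraMap_end_apply]
      show (x • (m : S)) = y * (m : S)
      rw [Algebra.smul_def]
    rw [hfm]
    have h1 : y * (m : S) ∈ J' * K ^ (n - 1) :=
      hsp (Ideal.mul_mem_mul (Ideal.mem_span_singleton_self y) m.2)
    exact contractAux J _ h1
  obtain ⟨p, hpm, -, hpc, hpa⟩ :=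
    LinearMap.exists_monic_and_natDegree_eq_and_coeff_mem_pow_and_aeval_eq_zero R f J hrange
  -- evaluate
  have hev : p.eval x = 0 := by
    rw [hf, Polynomial.aeval_algebraMap_apply_eq_algebraMap_eval] at hpa
    have hm0 : y ^ (n - 1) ∈ (K ^ (n - 1) : Ideal S) := Ideal.pow_mem_pow hyK _
    have h2 := congrArg (fun g : Module.End R N => g ⟨y ^ (n-1), hm0⟩) hpa
    simp only [Module.algebraMap_end_apply, LinearMap.zero_apply] at h2
    have h3 : (p.eval x) • (y ^ (n-1)) = 0 := congrArg Subtype.val h2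
    rw [Algebra.smul_def] at h3
    rcases mul_eq_zero.mp h3 with h | h
    · exact hinj (by rw [h]; simp)
    · exact absurd h (pow_ne_zero _ hyne)
  set d := p.natDegree with hd
  have hd0 : 0 < d := by
    rcases Nat.eq_zero_or_pos d with h | h
    · exfalso
      have : p = 1 := Polynomial.Monic.natDegree_eq_zero hpm |>.mp h
      rw [this] at hev
      simp at hev
    · exact h
  refine ⟨d, hd0, fun i => p.coeff (d - i), fun i h1 h2 => ?_, ?_⟩
  · have := hpc (d - i)
    rwa [show d - (d - i) = i by omega] at this
  · have hsum : ∑ i ∈ Finset.Icc 1 d, p.coeff (d - i) * x ^ (d - i)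
        = ∑ k ∈ Finset.range d, p.coeff k * x ^ k := by
      refine Finset.sum_nbij' (fun i => d - i) (fun k => d - k) ?_ ?_ ?_ ?_ ?_
      · intro i hi; rw [Finset.mem_Icc] at hi
        show d - i ∈ Finset.range d
        rw [Finset.mem_range]; omega
      · intro k hk; rw [Finset.mem_range] at hk
        show d - k ∈ Finset.Icc 1 d
        rw [Finset.mem_Icc]; omega
      · intro i hi; rw [Finset.mem_Icc] at hi
        show d - (d - i) = i
        omega
      · intro k hk; rw [Finset.mem_range] at hk
        show d - (d - k) = k
        omega
      · intro i _; rfl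
    rw [hsum]
    have h5 : p.eval x = (∑ k ∈ Finset.range d, p.coeff k * x ^ k) + x ^ d := by
      rw [Polynomial.eval_eq_sum_range, Finset.sum_range_succ, hpm.coeff_natDegree, one_mul]
    rw [add_comm, ← h5, hev]

lemma fwd {R S : Type} [CommRing R] [CommRing S] [Algebra R S] (J : Ideal R) (x : R)
    (hx : x ∈ idealIntClosure J) :
    algebraMap R S x ∈ idealIntClosure (J.map (algebraMap R S)) := by
  obtain ⟨n, hn, c, hc, heq⟩ := hx
  refine ⟨n, hn, fun i => algebraMap R S (c i), fun i h1 h2 => ?_, ?_⟩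
  · rw [← Ideal.map_pow]
    exact Ideal.mem_map_of_mem _ (hc i h1 h2)
  · have := congrArg (algebraMap R S) heq
    simpa [map_add, map_pow, map_sum, map_mul] using this

/-- For a finite extension `R ⊆ S` of Noetherian domains: `(IS)_α ∩ R = I_α`, and
consequently `(IS)_{>α} ∩ R = I_{>α}` (strict powers expressed as unions over `ε > 0`). -/
theorem stmt4 (R S : Type) [CommRing R] [IsDomain R] [IsNoetherianRing R]
    [CommRing S] [IsDomain S] [IsNoetherianRing S] [Algebra R S]
    (hinj : Function.Injective (algebraMap R S)) [Module.Finite R S]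
    (I : Ideal R) (α : ℚ) (hα : 0 ≤ α) :
    (∀ x : R, algebraMap R S x ∈ fracPow (I.map (algebraMap R S)) α ↔ x ∈ fracPow I α) ∧
    (∀ x : R,
      (∃ ε : ℚ, 0 < ε ∧ algebraMap R S x ∈ fracPow (I.map (algebraMap R S)) (α + ε)) ↔
      (∃ ε : ℚ, 0 < ε ∧ x ∈ fracPow I (α + ε))) := by
  have key : ∀ (β : ℚ) (x : R),
      algebraMap R S x ∈ fracPow (I.map (algebraMap R S)) β ↔ x ∈ fracPow I β := by
    intro β x
    show (algebraMap R S x) ^ β.den ∈ idealIntClosure ((I.map (algebraMap R S)) ^ β.num.toNat)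
      ↔ x ^ β.den ∈ idealIntClosure (I ^ β.num.toNat)
    rw [← map_pow, ← Ideal.map_pow]
    exact ⟨fun h => bwd hinj _ _ h, fun h => fwd _ _ h⟩
  refine ⟨key α, fun x => ?_⟩
  constructor
  · rintro ⟨ε, hε, h⟩
    exact ⟨ε, hε, (key (α + ε) x).mp h⟩
  · rintro ⟨ε, hε, h⟩
    exact ⟨ε, hε, (key (α + ε) x).mpr h⟩
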